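/- Kernel dimension of the first differential of the Heisenberg Poisson polynomial complex: for w ≥ 1, consider the ℝ-vector space of triples (α, β, γ) of polynomials in MvPolynomial (Fin 3) ℝ, each homogeneous of degree w, satisfying the three equations pderiv 0 γ = 0, pderiv 1 γ = 0, and γ = X 2 · (pderiv 0 α + pderiv 1 β). This space has ℝ-dimension (w+2)(w+3)/2. -/

import Mathlib

open MvPolynomial

namespace HeisenbergKer

/-- Shorthand for polynomials in three variables. -/
abbrev P := MvPolynomial (Fin 3) ℝ

/-- The `i`-th partial derivative as an `ℝ`-linear map on `MvPolynomial (Fin 3) ℝ`. -/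
noncomputable def D (i : Fin 3) : P →ₗ[ℝ] P := (pderiv i).toLinearMap

/-- Projection onto the first component `α` of a triple `(α, β, γ)`. -/
noncomputable def pα : (P × P × P) →ₗ[ℝ] P := LinearMap.fst ℝ P (P × P)

/-- Projection onto the second component `β` of a triple `(α, β, γ)`. -/
noncomputable def pβ : (P × P × P) →ₗ[ℝ] P :=
  (LinearMap.fst ℝ P P) ∘ₗ (LinearMap.snd ℝ P (P × P))

/-- Projection onto the third component `γ` of a triple `(α, β, γ)`. -/
noncomputable def pγ : (P × P × P) →ₗ[ℝ] P :=
  (LinearMap.snd ℝ P P) ∘ₗ (LinearMap.snd ℝ P (P × P))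

/-- The space of triples `(α, β, γ)` of polynomials, each homogeneous of degree `w`,
satisfying `∂₀ γ = 0`, `∂₁ γ = 0` and `γ = X 2 · (∂₀ α + ∂₁ β)`:
the kernel of the first differential of the weight-`w` Poisson polynomial
cohomology complex of the Heisenberg Lie–Poisson structure on `ℝ³`. -/
noncomputable def kerSpace (w : ℕ) : Submodule ℝ (P × P × P) :=
  ((homogeneousSubmodule (Fin 3) ℝ w).prod
      ((homogeneousSubmodule (Fin 3) ℝ w).prod (homogeneousSubmodule (Fin 3) ℝ w)))
    ⊓ LinearMap.ker (D 0 ∘ₗ pγ)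
    ⊓ LinearMap.ker (D 1 ∘ₗ pγ)
    ⊓ LinearMap.ker
        (pγ - (LinearMap.mulLeft ℝ (X 2 : P)) ∘ₗ (D 0 ∘ₗ pα + D 1 ∘ₗ pβ))

/-! ### Auxiliary material -/

lemma degree3 (d : Fin 3 →₀ ℕ) : d.degree = d 0 + d 1 + d 2 := by
  have h : d.degree = ∑ i ∈ (Finset.univ : Finset (Fin 3)), d i := by
    refine Finset.sum_subset (Finset.subset_univ _) ?_
    intro i _ hi
    simpa using Finsupp.notMem_support_iff.mp hi
  rw [h, Fin.sum_univ_three]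

lemma coeff_pderiv (i : Fin 3) (p : P) (d : Fin 3 →₀ ℕ) :
    coeff d (pderiv i p) = (d i + 1 : ℝ) * coeff (d + Finsupp.single i 1) p := by
  induction p using MvPolynomial.induction_on' with
  | monomial u a =>
    rw [pderiv_monomial, coeff_monomial, coeff_monomial]
    by_cases h : u i = 0
    · have h1 : u - Finsupp.single i 1 = u := by
        ext j
        rcases eq_or_ne i j with rfl | hij
        · simp [h]
        · simp [Finsupp.single_apply, hij]
      rw [h1]
      have h2 : u ≠ d + Finsupp.single i 1 := by
        intro he
        have := congrArg (fun f => f i) he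
        simp [Finsupp.single_apply, h] at this
      rw [if_neg h2]
      by_cases h3 : u = d
      · subst h3
        simp [h]
      · simp [h3]
    · by_cases h2 : u = d + Finsupp.single i 1
      · subst h2
        have h3 : d + Finsupp.single i 1 - Finsupp.single i 1 = d := by
          ext j; simp [Finsupp.single_apply]
        rw [h3, if_pos rfl]
        simp [Finsupp.single_apply, mul_comm]
      · have h3 : u - Finsupp.single i 1 ≠ d := by
          intro he
          apply h2
          rw [← he]
          ext j
          rcases eq_or_ne i j with rfl | hij
          · simp
            omega
          · simp [Finsupp.single_apply, hij, Ne.symm hij]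
        simp [h2, h3]
  | add p q hp hq => simp [hp, hq, mul_add]

noncomputable def degEquiv (m : ℕ) : {d : Fin 3 →₀ ℕ // d.degree = m} ≃ Sym (Fin 3) m :=
  Equiv.subtypeEquiv (Multiset.toFinsupp (α := Fin 3)).toEquiv.symm (fun d => by
    rw [show (Multiset.toFinsupp.toEquiv.symm d : Multiset (Fin 3)) = Finsupp.toMultiset d from rfl,
      Finsupp.card_toMultiset]
    exact Iff.rfl)

noncomputable instance instFtDeg (m : ℕ) : Fintype ↥{d : Fin 3 →₀ ℕ | d.degree = m} :=
  Fintype.ofEquiv _ (degEquiv m).symm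

lemma card_deg (m : ℕ) : Fintype.card ↥{d : Fin 3 →₀ ℕ | d.degree = m} = (m + 2).choose 2 := by
  have e : ↥{d : Fin 3 →₀ ℕ | d.degree = m} ≃ Sym (Fin 3) m := degEquiv m
  rw [Fintype.card_congr e, Sym.card_sym_eq_choose]
  have : Fintype.card (Fin 3) + m - 1 = m + 2 := by simp; omega
  rw [this, ← Nat.choose_symm (by omega : m ≤ m + 2)]
  congr 1
  omega

lemma finrank_homog (m : ℕ) :
    Module.finrank ℝ (homogeneousSubmodule (Fin 3) ℝ m) = (m + 2).choose 2 := by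
  rw [homogeneousSubmodule_eq_finsupp_supported]
  rw [(AddMonoidAlgebra.supportedEquivFinsupp {d : Fin 3 →₀ ℕ | d.degree = m}).finrank_eq]
  rw [Module.finrank_finsupp_self]
  exact card_deg m

instance fdHomog (m : ℕ) : FiniteDimensional ℝ (homogeneousSubmodule (Fin 3) ℝ m) := by
  rw [homogeneousSubmodule_eq_finsupp_supported]
  exact (AddMonoidAlgebra.supportedEquivFinsupp {d : Fin 3 →₀ ℕ | d.degree = m}).symm.finiteDimensional

lemma homog_span (m : ℕ) : homogeneousSubmodule (Fin 3) ℝ m =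
    Submodule.span ℝ ((fun d : Fin 3 →₀ ℕ => (monomial d 1 : P)) '' {d | d.degree = m}) := by
  rw [homogeneousSubmodule_eq_finsupp_supported, AddMonoidAlgebra.supported_eq_span_single]
  simp only [MvPolynomial.single_eq_monomial]

lemma D_mem {m : ℕ} (i : Fin 3) {p : P} (hp : p ∈ homogeneousSubmodule (Fin 3) ℝ m) :
    (pderiv i) p ∈ homogeneousSubmodule (Fin 3) ℝ (m - 1) := by
  have hle : homogeneousSubmodule (Fin 3) ℝ m ≤
      Submodule.comap (pderiv i).toLinearMap (homogeneousSubmodule (Fin 3) ℝ (m - 1)) := by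
    rw [homog_span m]
    rw [Submodule.span_le]
    rintro _ ⟨d, hd, rfl⟩
    simp only [SetLike.mem_coe, Submodule.mem_comap, Derivation.coeFn_coe]
    rw [pderiv_monomial]
    by_cases h : d i = 0
    · simp [h]
    · rw [mem_homogeneousSubmodule]
      apply isHomogeneous_monomial
      have hd' : d.degree = m := hd
      rw [degree3] at hd' ⊢
      have h0 : ∀ j : Fin 3,
          (d - Finsupp.single i 1 : Fin 3 →₀ ℕ) j = d j - (if i = j then 1 else 0) := by
        intro j; simp [Finsupp.single_apply]
      rw [h0 0, h0 1, h0 2]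
      have := Nat.one_le_iff_ne_zero.mpr h
      fin_cases i <;> simp_all <;> omega
  exact hle hp

lemma eq_cz {m : ℕ} {q : P} (hq : q ∈ homogeneousSubmodule (Fin 3) ℝ m)
    (h0 : (pderiv 0) q = 0) (h1 : (pderiv 1) q = 0) :
    q ∈ Submodule.span ℝ {((X 2 : P) ^ m)} := by
  have key : q = (coeff (Finsupp.single 2 m) q) • (X 2 : P) ^ m := by
    apply MvPolynomial.ext
    intro d
    rw [smul_eq_C_mul, coeff_C_mul, coeff_X_pow]
    by_cases hd : d = Finsupp.single 2 m
    · subst hd; simp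
    · rw [if_neg (by exact fun h => hd h.symm), mul_zero]
      by_cases hc : coeff d q = 0
      · exact hc
      · exfalso
        have hd0 : d 0 = 0 := by
          by_contra h
          have e := coeff_pderiv 0 q (d - Finsupp.single 0 1)
          rw [h0] at e
          have hsum : d - Finsupp.single 0 1 + Finsupp.single 0 1 = d := by
            ext j
            rcases eq_or_ne j 0 with rfl | hj
            · simp; omega
            · simp [Finsupp.single_apply, Ne.symm hj]
          rw [hsum] at e
          simp only [coeff_zero] at e
          rcases mul_eq_zero.mp e.symm with h' | h'
          · exact Nat.cast_add_one_ne_zero _ h'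
          · exact hc h'
        have hd1 : d 1 = 0 := by
          by_contra h
          have e := coeff_pderiv 1 q (d - Finsupp.single 1 1)
          rw [h1] at e
          have hsum : d - Finsupp.single 1 1 + Finsupp.single 1 1 = d := by
            ext j
            rcases eq_or_ne j 1 with rfl | hj
            · simp; omega
            · simp [Finsupp.single_apply, Ne.symm hj]
          rw [hsum] at e
          simp only [coeff_zero] at e
          rcases mul_eq_zero.mp e.symm with h' | h'
          · exact Nat.cast_add_one_ne_zero _ h'
          · exact hc h'
        have hdeg : d.degree = m := by
          by_contra h
          exact hc ((mem_homogeneousSubmodule m q).mp hq |>.coeff_eq_zero h)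
        apply hd
        ext j
        fin_cases j <;> simp [Finsupp.single_apply, hd0, hd1]
        · rw [degree3] at hdeg; omega
  rw [key]
  exact Submodule.smul_mem _ _ (Submodule.mem_span_singleton_self _)

lemma mem_kerSpace {w : ℕ} {v : P × P × P} :
    v ∈ kerSpace w ↔
      (v.1 ∈ homogeneousSubmodule (Fin 3) ℝ w ∧ v.2.1 ∈ homogeneousSubmodule (Fin 3) ℝ w ∧
        v.2.2 ∈ homogeneousSubmodule (Fin 3) ℝ w) ∧
      (pderiv 0) v.2.2 = 0 ∧ (pderiv 1) v.2.2 = 0 ∧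
      v.2.2 = X 2 * ((pderiv 0) v.1 + (pderiv 1) v.2.1) := by
  simp only [kerSpace, Submodule.mem_inf, LinearMap.mem_ker, LinearMap.coe_comp,
    Function.comp_apply, LinearMap.sub_apply, LinearMap.add_apply, LinearMap.mulLeft_apply,
    sub_eq_zero, D, pα, pβ, pγ, Derivation.coeFn_coe, Submodule.mem_prod, and_assoc,
    LinearMap.fst_apply, LinearMap.snd_apply]

/-- The divergence-type map `(α, β) ↦ ∂₀ α + ∂₁ β`. -/
noncomputable def T : (P × P) →ₗ[ℝ] P :=
  D 0 ∘ₗ LinearMap.fst ℝ P P + D 1 ∘ₗ LinearMap.snd ℝ P P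

lemma T_apply (v : P × P) : T v = (pderiv 0) v.1 + (pderiv 1) v.2 := by
  simp [T, D]

/-- Pairs of homogeneous polynomials of degree `w`. -/
noncomputable def HH (w : ℕ) : Submodule ℝ (P × P) :=
  (homogeneousSubmodule (Fin 3) ℝ w).prod (homogeneousSubmodule (Fin 3) ℝ w)

/-- The line spanned by `z^k`. -/
noncomputable def Zs (k : ℕ) : Submodule ℝ P := Submodule.span ℝ {(X 2 : P) ^ k}

/-- Pairs `(α, β)` of homogeneous degree-`(k+1)` polynomials with
`∂₀ α + ∂₁ β` a multiple of `z^k`. -/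
noncomputable def Ws (k : ℕ) : Submodule ℝ (P × P) :=
  HH (k + 1) ⊓ Submodule.comap T (Zs k)

/-- A product of submodules is equivalent to the product of the two submodules. -/
def prodEquivAux {M N : Type*} [AddCommGroup M] [AddCommGroup N] [Module ℝ M] [Module ℝ N]
    (p : Submodule ℝ M) (q : Submodule ℝ N) : (p.prod q) ≃ₗ[ℝ] p × q where
  toFun x := (⟨x.1.1, x.2.1⟩, ⟨x.1.2, x.2.2⟩)
  map_add' _ _ := rfl
  map_smul' _ _ := rfl
  invFun y := ⟨(y.1.1, y.2.1), y.1.2, y.2.2⟩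
  left_inv _ := rfl
  right_inv _ := rfl

instance freeHomog (m : ℕ) : Module.Free ℝ (homogeneousSubmodule (Fin 3) ℝ m) :=
  Module.Free.of_divisionRing ℝ _

instance fdHH (w : ℕ) : FiniteDimensional ℝ (HH w) :=
  (prodEquivAux (homogeneousSubmodule (Fin 3) ℝ w)
    (homogeneousSubmodule (Fin 3) ℝ w)).symm.finiteDimensional

lemma finrank_HH (w : ℕ) :
    Module.finrank ℝ (HH w) = (w + 2).choose 2 + (w + 2).choose 2 := by
  rw [HH, (prodEquivAux _ _).finrank_eq, Module.finrank_prod, finrank_homog]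

lemma zpow_ne (k : ℕ) : ((X 2 : P) ^ k) ≠ 0 :=
  pow_ne_zero _ (MvPolynomial.X_ne_zero _)

lemma finrank_Zs (k : ℕ) : Module.finrank ℝ (Zs k) = 1 :=
  finrank_span_singleton (zpow_ne k)

lemma map_T_HH (k : ℕ) :
    Submodule.map T (HH (k + 1)) = homogeneousSubmodule (Fin 3) ℝ k := by
  apply le_antisymm
  · rintro _ ⟨⟨a, b⟩, ⟨ha, hb⟩, rfl⟩
    rw [T_apply]
    have h1 := D_mem 0 ha
    have h2 := D_mem 1 hb
    simp only [Nat.add_sub_cancel] at h1 h2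
    exact add_mem h1 h2
  · rw [homog_span k, Submodule.span_le]
    rintro _ ⟨d, hd, rfl⟩
    have hne : ((d 0 : ℝ) + 1) ≠ 0 := Nat.cast_add_one_ne_zero _
    rw [SetLike.mem_coe]
    refine Submodule.mem_map.mpr
      ⟨(monomial (d + Finsupp.single 0 1) ((d 0 : ℝ) + 1)⁻¹, 0), ⟨?_, ?_⟩, ?_⟩
    · show monomial (d + Finsupp.single 0 1) ((d 0 : ℝ) + 1)⁻¹ ∈
        homogeneousSubmodule (Fin 3) ℝ (k + 1)
      rw [mem_homogeneousSubmodule]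
      apply isHomogeneous_monomial
      have hd' : d.degree = k := hd
      rw [degree3] at hd' ⊢
      simp only [Finsupp.add_apply, Finsupp.single_apply]
      norm_num
      rw [if_neg (by decide : ¬ ((0 : Fin 3) = 2))]
      omega
    · exact zero_mem _
    · rw [T_apply]
      simp only [map_zero, add_zero]
      rw [pderiv_monomial]
      have h1 : d + Finsupp.single 0 1 - Finsupp.single 0 1 = d := by
        ext j; simp [Finsupp.single_apply]
      rw [h1]
      have hval : ((d + Finsupp.single 0 1 : Fin 3 →₀ ℕ) 0 : ℕ) = d 0 + 1 := by
        simp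
      rw [show ((d 0 : ℝ) + 1)⁻¹ * (((d + Finsupp.single 0 1 : Fin 3 →₀ ℕ) 0 : ℕ) : ℝ) = 1 by
        rw [hval]
        push_cast
        exact inv_mul_cancel₀ hne]

lemma Ws_inf_ker (k : ℕ) :
    Ws k ⊓ LinearMap.ker T = HH (k + 1) ⊓ LinearMap.ker T := by
  ext x
  simp only [Ws, Submodule.mem_inf, Submodule.mem_comap, LinearMap.mem_ker]
  constructor
  · rintro ⟨⟨h1, _⟩, h3⟩; exact ⟨h1, h3⟩
  · rintro ⟨h1, h3⟩; exact ⟨⟨h1, by rw [h3]; exact zero_mem _⟩, h3⟩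

lemma map_T_Ws (k : ℕ) : Submodule.map T (Ws k) = Zs k := by
  apply le_antisymm
  · rintro _ ⟨v, ⟨_, hv⟩, rfl⟩
    exact hv
  · rw [Zs, Submodule.span_le, Set.singleton_subset_iff, SetLike.mem_coe]
    refine Submodule.mem_map.mpr ⟨(X 0 * (X 2 : P) ^ k, 0), ⟨⟨?_, ?_⟩, ?_⟩, ?_⟩
    · show X 0 * (X 2 : P) ^ k ∈ homogeneousSubmodule (Fin 3) ℝ (k + 1)
      rw [mem_homogeneousSubmodule]
      have := ((isHomogeneous_X ℝ (0 : Fin 3)).mul ((isHomogeneous_X ℝ (2 : Fin 3)).pow k))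
      simpa [one_mul, Nat.add_comm] using this
    · exact zero_mem _
    · show T _ ∈ Zs k
      rw [T_apply]
      simp only [map_zero, add_zero]
      rw [pderiv_mul, pderiv_X_self, pderiv_pow, pderiv_X_of_ne (by decide : (2 : Fin 3) ≠ 0)]
      simp [Zs, Submodule.mem_span_singleton_self]
    · rw [T_apply]
      simp only [map_zero, add_zero]
      rw [pderiv_mul, pderiv_X_self, pderiv_pow, pderiv_X_of_ne (by decide : (2 : Fin 3) ≠ 0)]
      simp

instance fdWs (k : ℕ) : FiniteDimensional ℝ (Ws k) :=
  Submodule.finiteDimensional_of_le (inf_le_left : Ws k ≤ HH (k + 1))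

lemma finrank_comap_subtype {M : Type*} [AddCommGroup M] [Module ℝ M] (p U : Submodule ℝ M) :
    Module.finrank ℝ (Submodule.comap p.subtype U) = Module.finrank ℝ ↥(p ⊓ U) := by
  have h : Submodule.comap p.subtype U = Submodule.comap p.subtype (p ⊓ U) := by
    ext x
    simp [x.2]
  rw [h]
  exact (Submodule.comapSubtypeEquivOfLe inf_le_left).finrank_eq

lemma toW_mem {k : ℕ} {v : P × P × P} (hv : v ∈ kerSpace (k + 1)) :
    (v.1, v.2.1) ∈ Ws k := by
  obtain ⟨⟨hα, hβ, hγ⟩, h0, h1, h4⟩ := mem_kerSpace.mp hv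
  refine ⟨⟨hα, hβ⟩, ?_⟩
  have hz := eq_cz hγ h0 h1
  rw [Submodule.mem_span_singleton] at hz
  obtain ⟨c, hc⟩ := hz
  have hcan : (X 2 : P) * ((pderiv 0) v.1 + (pderiv 1) v.2.1) = X 2 * (c • (X 2 : P) ^ k) := by
    rw [← h4, ← hc, pow_succ' (X 2 : P) k]
    exact (mul_smul_comm c (X 2 : P) ((X 2 : P) ^ k)).symm
  have := mul_left_cancel₀ (MvPolynomial.X_ne_zero (2 : Fin 3)) hcan
  show T _ ∈ Zs k
  rw [T_apply]
  simp only
  rw [this]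
  exact Submodule.smul_mem _ _ (Submodule.mem_span_singleton_self _)

lemma ofW_mem {k : ℕ} {u : P × P} (hu : u ∈ Ws k) :
    (u.1, u.2, (X 2 : P) * ((pderiv 0) u.1 + (pderiv 1) u.2)) ∈ kerSpace (k + 1) := by
  obtain ⟨⟨hα, hβ⟩, hT⟩ := hu
  have hT' : (pderiv 0) u.1 + (pderiv 1) u.2 ∈ Zs k := by
    rw [show (pderiv 0) u.1 + (pderiv 1) u.2 = T u from (T_apply u).symm]
    exact hT
  rw [Zs, Submodule.mem_span_singleton] at hT'
  obtain ⟨c, hc⟩ := hT'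
  rw [mem_kerSpace]
  refine ⟨⟨hα, hβ, ?_⟩, ?_, ?_, rfl⟩
  · show (X 2 : P) * ((pderiv 0) u.1 + (pderiv 1) u.2) ∈ _
    rw [← hc, mul_smul_comm, ← pow_succ' (X 2 : P) k]
    apply Submodule.smul_mem
    rw [mem_homogeneousSubmodule]
    simpa using (isHomogeneous_X ℝ (2 : Fin 3)).pow (k + 1)
  · show (pderiv 0) ((X 2 : P) * ((pderiv 0) u.1 + (pderiv 1) u.2)) = 0
    rw [← hc, mul_smul_comm, ← pow_succ' (X 2 : P) k, Derivation.map_smul]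
    rw [pderiv_pow, pderiv_X_of_ne (by decide : (2 : Fin 3) ≠ 0)]
    simp
  · show (pderiv 1) ((X 2 : P) * ((pderiv 0) u.1 + (pderiv 1) u.2)) = 0
    rw [← hc, mul_smul_comm, ← pow_succ' (X 2 : P) k, Derivation.map_smul]
    rw [pderiv_pow, pderiv_X_of_ne (by decide : (2 : Fin 3) ≠ 1)]
    simp

/-- The kernel space is isomorphic to the space `Ws k` of pairs `(α, β)`. -/
noncomputable def kerEquiv (k : ℕ) : (kerSpace (k + 1)) ≃ₗ[ℝ] Ws k where
  toFun v := ⟨(v.1.1, v.1.2.1), toW_mem v.2⟩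
  map_add' _ _ := rfl
  map_smul' _ _ := rfl
  invFun u := ⟨(u.1.1, u.1.2, (X 2 : P) * ((pderiv 0) u.1.1 + (pderiv 1) u.1.2)),
    ofW_mem u.2⟩
  left_inv v := by
    apply Subtype.ext
    obtain ⟨_, _, _, h4⟩ := mem_kerSpace.mp v.2
    exact Prod.ext rfl (Prod.ext rfl h4.symm)
  right_inv u := rfl

/-- **Kernel dimension of the first differential of the Heisenberg Poisson polynomial
complex.** For `w ≥ 1`, the space of triples `(α, β, γ)` of degree-`w` homogeneous
polynomials with `∂₀ γ = ∂₁ γ = 0` and `γ = X 2 · (∂₀ α + ∂₁ β)` has dimension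
`(w+2)(w+3)/2`. -/
theorem finrank_kerSpace (w : ℕ) (hw : 1 ≤ w) :
    Module.finrank ℝ (kerSpace w) = (w + 2) * (w + 3) / 2 := by
  obtain ⟨k, rfl⟩ : ∃ k, w = k + 1 := ⟨w - 1, by omega⟩
  have e1 : Module.finrank ℝ (kerSpace (k + 1)) = Module.finrank ℝ (Ws k) :=
    (kerEquiv k).finrank_eq
  -- rank-nullity on `HH (k+1)`
  have h2 := LinearMap.finrank_range_add_finrank_ker (T.domRestrict (HH (k + 1)))
  have hr2 : LinearMap.range (T.domRestrict (HH (k + 1))) = homogeneousSubmodule (Fin 3) ℝ k := by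
    rw [LinearMap.range_domRestrict]
    exact map_T_HH k
  rw [hr2, LinearMap.ker_domRestrict, finrank_comap_subtype, finrank_homog, finrank_HH] at h2
  -- rank-nullity on `Ws k`
  have h3 := LinearMap.finrank_range_add_finrank_ker (T.domRestrict (Ws k))
  have hr3 : LinearMap.range (T.domRestrict (Ws k)) = Zs k := by
    rw [LinearMap.range_domRestrict]
    exact map_T_Ws k
  rw [hr3, finrank_Zs, LinearMap.ker_domRestrict, finrank_comap_subtype, Ws_inf_ker] at h3
  rw [e1, ← h3]
  -- arithmetic with binomial coefficients
  have p1 : (k + 3).choose 2 = (k + 2).choose 2 + (k + 2) := by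
    rw [show k + 3 = (k + 2) + 1 from rfl, Nat.choose_succ_succ (k + 2) 1, Nat.choose_one_right,
      Nat.add_comm]
  have p2 : (k + 4).choose 2 = (k + 3).choose 2 + (k + 3) := by
    rw [show k + 4 = (k + 3) + 1 from rfl, Nat.choose_succ_succ (k + 3) 1, Nat.choose_one_right,
      Nat.add_comm]
  have p3 : (k + 1 + 2) * (k + 1 + 3) / 2 = (k + 4).choose 2 := by
    rw [Nat.choose_two_right, show k + 4 - 1 = k + 3 from rfl]
    congr 1
    ring
  rw [p3]
  have hk12 : k + 1 + 2 = k + 3 := by omega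
  rw [hk12] at h2
  set a := Module.finrank ℝ ↥(HH (k + 1) ⊓ LinearMap.ker T) with ha
  set A := (k + 2).choose 2 with hA
  set B := (k + 3).choose 2 with hB
  set Cc := (k + 4).choose 2 with hCc
  omega

end HeisenbergKer
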